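/- With normalization N_{λℓ}(L) = L^{−d/2} |2^{ℓ−(d−2)/2} Γ(ℓ+d/2) Γ(iλ)/Γ(iλ+ρ+ℓ)|^{−1} and degeneracy G_ℓ = (2ℓ+d−2)(ℓ+d−3)!/(ℓ!(d−2)!), the product G_ℓ N_{λℓ}(L)² is asymptotically bounded by a constant times 2^{−2ℓ} ℓ^{d−3} as ℓ → ∞. -/

import Mathlib

open Real Filter Set

lemma abs_Gamma_le (z : ℂ) (hz : 0 < z.re) :
    ‖Complex.Gamma z‖ ≤ Real.Gamma z.re := by
  rw [Complex.Gamma_eq_integral hz, Complex.GammaIntegral,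
    Real.Gamma_eq_integral hz]
  refine le_trans (MeasureTheory.norm_integral_le_integral_norm _) (le_of_eq ?_)
  refine MeasureTheory.setIntegral_congr_fun measurableSet_Ioi (fun x hx => ?_)
  simp only [norm_mul, Complex.norm_real, Real.norm_eq_abs,
    Complex.norm_cpow_eq_rpow_re_of_pos hx]
  rw [abs_of_nonneg (Real.exp_pos _).le, Complex.sub_re, Complex.one_re]

lemma gamma_half_sq (x : ℝ) (hx : 0 < x) :
    Real.Gamma (x + 1/2) ^ 2 ≤ Real.Gamma x * Real.Gamma (x + 1) := by
  have h := Real.convexOn_log_Gamma.2 (mem_Ioi.2 hx) (mem_Ioi.2 (by linarith : (0:ℝ) < x + 1))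
    (by norm_num : (0:ℝ) ≤ 1/2) (by norm_num : (0:ℝ) ≤ 1/2) (by norm_num)
  simp only [smul_eq_mul, Function.comp_apply] at h
  have hmid : 1/2 * x + 1/2 * (x+1) = x + 1/2 := by ring
  rw [hmid] at h
  have h1 : 0 < Real.Gamma (x + 1/2) := Real.Gamma_pos_of_pos (by linarith)
  have h2 : 0 < Real.Gamma x := Real.Gamma_pos_of_pos hx
  have h3 : 0 < Real.Gamma (x + 1) := Real.Gamma_pos_of_pos (by linarith)
  have hsq : 0 < Real.Gamma (x + 1/2) ^ 2 := pow_pos h1 2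
  have hpr : 0 < Real.Gamma x * Real.Gamma (x + 1) := mul_pos h2 h3
  rw [← Real.log_le_log_iff hsq hpr, Real.log_pow, Real.log_mul h2.ne' h3.ne']
  push_cast
  linarith

lemma fac_add_le (l m : ℕ) : (Nat.factorial (l + m)) ≤ Nat.factorial l * (l + m) ^ m := by
  induction m with
  | zero => simp
  | succ m ih =>
    rw [show l + (m+1) = (l+m) + 1 from rfl, Nat.factorial_succ]
    calc (l + m + 1) * Nat.factorial (l+m) ≤ (l + m + 1) * (Nat.factorial l * (l+m)^m) :=
          Nat.mul_le_mul_left _ ih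
      _ ≤ Nat.factorial l * (l + (m+1)) ^ (m+1) := by
          rw [pow_succ]
          have : (l+m)^m ≤ (l + (m+1))^m := Nat.pow_le_pow_left (by omega) m
          calc (l + m + 1) * (Nat.factorial l * (l+m)^m)
              = Nat.factorial l * ((l+m)^m * (l+m+1)) := by ring
            _ ≤ Nat.factorial l * ((l+(m+1))^m * (l+(m+1))) :=
                Nat.mul_le_mul_left _ (Nat.mul_le_mul this (by omega))

set_option maxHeartbeats 1000000 in
/-- With normalization
`N_{λℓ}(L) = L^{−d/2} |2^{ℓ−(d−2)/2} Γ(ℓ+d/2) Γ(iλ)/Γ(iλ+ρ+ℓ)|^{−1}` and degeneracy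
`G_ℓ = (2ℓ+d−2)(ℓ+d−3)!/(ℓ!(d−2)!)`, the product `G_ℓ N_{λℓ}(L)²` is bounded, for all
large `ℓ`, by a constant times `2^{−2ℓ} ℓ^{d−3}`. -/
theorem stmt14 (d : ℕ) (hd : 2 ≤ d) (L lam : ℝ) (hL : 0 < L) (hlam : 0 ≤ lam)
    (ρ : ℝ) (hρ : ρ = ((d:ℝ) - 1) / 2)
    (Gdeg : ℕ → ℝ)
    (hG : ∀ ℓ : ℕ, Gdeg ℓ =
      (2 * (ℓ:ℝ) + (d:ℝ) - 2) * (Nat.factorial (ℓ + d - 3) : ℝ) /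
        ((Nat.factorial ℓ : ℝ) * (Nat.factorial (d - 2) : ℝ)))
    (Nfac : ℕ → ℝ)
    (hN : ∀ ℓ : ℕ, Nfac ℓ = L ^ (-(d:ℝ) / 2) *
      (norm ((2:ℂ) ^ ((ℓ:ℂ) - ((d:ℂ) - 2) / 2) * Complex.Gamma ((ℓ:ℂ) + (d:ℂ) / 2)
          * Complex.Gamma (Complex.I * lam)
          / Complex.Gamma (Complex.I * lam + (ρ:ℂ) + (ℓ:ℂ))))⁻¹) :
    ∃ C : ℝ, ∀ᶠ ℓ : ℕ in atTop,
      Gdeg ℓ * Nfac ℓ ^ 2 ≤ C * (2:ℝ) ^ (-(2:ℝ) * (ℓ:ℝ)) * (ℓ:ℝ) ^ ((d:ℝ) - 3) := by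
  have hd2 : (2:ℝ) ≤ (d:ℝ) := by exact_mod_cast hd
  rcases hlam.eq_or_lt with h0 | hpos
  · -- degenerate case lam = 0 : Gamma(0) = 0 makes Nfac vanish
    refine ⟨0, Eventually.of_forall fun ℓ => ?_⟩
    have hz : Nfac ℓ = 0 := by
      rw [hN ℓ, ← h0]
      simp [Complex.Gamma_zero]
    rw [hz]
    simp
  · -- main case lam > 0
    set g : ℝ := ‖Complex.Gamma (Complex.I * lam)‖ with hgdef
    have hg : 0 < g := by
      rw [hgdef]
      refine norm_pos_iff.2 (Complex.Gamma_ne_zero fun m hm => ?_)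
      have him := congrArg Complex.im hm
      simp at him
      exact hpos.ne' him
    set D : ℝ := (d:ℝ) * ((d:ℝ) - 2) ^ (d - 3) with hDdef
    have hD0 : 0 ≤ D := by
      apply mul_nonneg (by positivity)
      exact pow_nonneg (by linarith) _
    refine ⟨D * L ^ (-(d:ℝ)) * (g⁻¹) ^ 2 * (2:ℝ) ^ ((d:ℝ) - 2), ?_⟩
    filter_upwards [eventually_ge_atTop 1] with ℓ hℓ
    have hℓ0 : 0 < (ℓ:ℝ) := by exact_mod_cast hℓ
    have hℓR : (1:ℝ) ≤ (ℓ:ℝ) := by exact_mod_cast hℓ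
    set x : ℝ := (ℓ:ℝ) + ((d:ℝ) - 2) / 2 with hxdef
    have hx : 0 < x := by rw [hxdef]; linarith
    have hxℓ : (ℓ:ℝ) ≤ x := by rw [hxdef]; linarith
    set G1 : ℝ := Real.Gamma x with hG1def
    have hG1 : 0 < G1 := Real.Gamma_pos_of_pos hx
    set P : ℝ := (2:ℝ) ^ (2 * (ℓ:ℝ) - ((d:ℝ) - 2)) with hPdef
    have hP : 0 < P := Real.rpow_pos_of_pos two_pos _
    set B : ℝ := ‖Complex.Gamma (Complex.I * lam + (ρ:ℂ) + (ℓ:ℂ))‖ with hBdef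
    have hB0 : 0 ≤ B := norm_nonneg _
    -- compute the re of the shifted argument
    have hzre : (Complex.I * lam + (ρ:ℂ) + (ℓ:ℂ)).re = x + 1/2 := by
      simp [Complex.add_re, Complex.mul_re, hρ, hxdef]
      ring
    have hxpos' : 0 < x + 1/2 := by linarith
    have hB : B ≤ Real.Gamma (x + 1/2) := by
      have := abs_Gamma_le (Complex.I * lam + (ρ:ℂ) + (ℓ:ℂ)) (by rw [hzre]; linarith)
      rwa [hzre] at this
    have hB2 : B ^ 2 ≤ x * G1 ^ 2 := by
      have h1 : B ^ 2 ≤ Real.Gamma (x + 1/2) ^ 2 := pow_le_pow_left₀ hB0 hB 2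
      have h2 := gamma_half_sq x hx
      have h3 : Real.Gamma (x + 1) = x * G1 := Real.Gamma_add_one hx.ne'
      calc B ^ 2 ≤ Real.Gamma (x + 1/2) ^ 2 := h1
        _ ≤ Real.Gamma x * Real.Gamma (x + 1) := h2
        _ = x * G1 ^ 2 := by rw [h3, ← hG1def]; ring
    -- rewrite Nfac ℓ ^ 2
    have hq : (ℓ:ℂ) + (d:ℂ)/2 = (((ℓ:ℝ) + (d:ℝ)/2 : ℝ) : ℂ) := by push_cast; ring
    have hw : (ℓ:ℂ) - ((d:ℂ) - 2)/2 = (((ℓ:ℝ) - ((d:ℝ) - 2)/2 : ℝ) : ℂ) := by push_cast; ring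
    have hQpos : 0 < Real.Gamma ((ℓ:ℝ) + (d:ℝ)/2) := Real.Gamma_pos_of_pos (by linarith)
    have habs : ‖(2:ℂ) ^ ((ℓ:ℂ) - ((d:ℂ) - 2) / 2)
        * Complex.Gamma ((ℓ:ℂ) + (d:ℂ) / 2) * Complex.Gamma (Complex.I * lam)
        / Complex.Gamma (Complex.I * lam + (ρ:ℂ) + (ℓ:ℂ))‖
        = (2:ℝ) ^ ((ℓ:ℝ) - ((d:ℝ) - 2)/2) * Real.Gamma ((ℓ:ℝ) + (d:ℝ)/2) * g / B := by
      rw [norm_div, norm_mul, norm_mul, hw, hq,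
        show ((2:ℂ)) = (((2:ℝ)):ℂ) by norm_num,
        Complex.norm_cpow_eq_rpow_re_of_pos two_pos, Complex.ofReal_re,
        Complex.Gamma_ofReal, Complex.norm_real, Real.norm_eq_abs, abs_of_pos hQpos]
    have hQx : (ℓ:ℝ) + (d:ℝ)/2 = x + 1 := by rw [hxdef]; ring
    have hp2 : ((2:ℝ) ^ ((ℓ:ℝ) - ((d:ℝ) - 2)/2)) ^ 2 = P := by
      rw [hPdef, ← Real.rpow_natCast ((2:ℝ) ^ ((ℓ:ℝ) - ((d:ℝ) - 2)/2)) 2,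
        ← Real.rpow_mul two_pos.le]
      congr 1; push_cast; ring
    have hL2 : (L ^ (-(d:ℝ)/2)) ^ 2 = L ^ (-(d:ℝ)) := by
      rw [← Real.rpow_natCast (L ^ (-(d:ℝ)/2)) 2, ← Real.rpow_mul hL.le]
      congr 1; push_cast; ring
    have hNsq : Nfac ℓ ^ 2
        = L ^ (-(d:ℝ)) * (B ^ 2 / (P * Real.Gamma ((ℓ:ℝ) + (d:ℝ)/2) ^ 2 * g ^ 2)) := by
      rw [hN ℓ, habs, inv_div, mul_pow, div_pow, mul_pow, mul_pow, hp2, hL2]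
    -- bound on the degeneracy factor
    have hGd0 : 0 ≤ Gdeg ℓ := by
      rw [hG ℓ]
      apply div_nonneg _ (by positivity)
      apply mul_nonneg (by linarith) (by positivity)
    have hGd : Gdeg ℓ ≤ D * (ℓ:ℝ) ^ (d - 2) := by
      rcases Nat.lt_or_ge d 3 with hd3 | hd3
      · -- d = 2
        have hd2' : d = 2 := by omega
        subst hd2'
        rw [hG ℓ]
        have h1 : ℓ + 2 - 3 = ℓ - 1 := by omega
        have h2 : (Nat.factorial ℓ : ℝ) = (ℓ:ℝ) * (Nat.factorial (ℓ - 1) : ℝ) := by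
          rw [← Nat.cast_mul, ← Nat.mul_factorial_pred (by omega : ℓ ≠ 0)]
        rw [h1, h2]
        have hf : (0:ℝ) < (Nat.factorial (ℓ - 1) : ℝ) := by positivity
        rw [hDdef]
        norm_num
        rw [div_le_iff₀ (by positivity)]
        ring_nf
        nlinarith [hf, hℓ0]
      · -- d ≥ 3
        set m : ℕ := d - 3 with hmdef
        have hdm : d - 2 = m + 1 := by omega
        have hidx : ℓ + d - 3 = ℓ + m := by omega
        have hmd : ((m:ℝ) + 1) = (d:ℝ) - 2 := by
          have : (d:ℝ) = ((m:ℝ) + 3) := by rw [hmdef]; push_cast [Nat.cast_sub (by omega : 3 ≤ d)]; ring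
          rw [this]; ring
        rw [hG ℓ, hidx, hdm]
        rw [div_le_iff₀ (by positivity)]
        have hfac : ((Nat.factorial (ℓ + m)) : ℝ)
            ≤ (Nat.factorial ℓ : ℝ) * (((m:ℝ) + 1) * (ℓ:ℝ)) ^ m := by
          have hn : Nat.factorial (ℓ + m) ≤ Nat.factorial ℓ * ((m + 1) * ℓ) ^ m := by
            calc Nat.factorial (ℓ + m) ≤ Nat.factorial ℓ * (ℓ + m) ^ m := fac_add_le ℓ m
              _ ≤ Nat.factorial ℓ * ((m + 1) * ℓ) ^ m :=
                  Nat.mul_le_mul_left _ (Nat.pow_le_pow_left (by nlinarith [hℓ]) m)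
          exact_mod_cast hn
        have h2ld : 2 * (ℓ:ℝ) + (d:ℝ) - 2 ≤ (d:ℝ) * (ℓ:ℝ) := by nlinarith
        have hfone : (1:ℝ) ≤ (Nat.factorial (m + 1) : ℝ) := by
          exact_mod_cast Nat.one_le_iff_ne_zero.2 (Nat.factorial_pos (m+1)).ne'
        calc (2 * (ℓ:ℝ) + (d:ℝ) - 2) * ((Nat.factorial (ℓ + m)) : ℝ)
            ≤ ((d:ℝ) * (ℓ:ℝ)) * ((Nat.factorial ℓ : ℝ) * (((m:ℝ) + 1) * (ℓ:ℝ)) ^ m) := by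
              apply mul_le_mul h2ld hfac (by positivity) (by positivity)
          _ = ((d:ℝ) * ((m:ℝ)+1) ^ m * (ℓ:ℝ) ^ (m + 1)) * (Nat.factorial ℓ : ℝ) := by
              rw [mul_pow]; ring
          _ ≤ (D * (ℓ:ℝ) ^ (m+1)) * ((Nat.factorial ℓ : ℝ) * (Nat.factorial (m+1) : ℝ)) := by
              have hDval : D = (d:ℝ) * ((m:ℝ)+1) ^ m := by
                rw [hDdef, ← hmd, hmdef]
              rw [hDval]
              exact mul_le_mul_of_nonneg_left
                (le_mul_of_one_le_right (by positivity) hfone) (by positivity)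
    -- exponent identities
    have e1 : ((ℓ:ℝ)) ^ (d - 2) = (ℓ:ℝ) ^ ((d:ℝ) - 2) := by
      rw [← Real.rpow_natCast _ (d-2), Nat.cast_sub hd]
      norm_num
    have hℓe : (ℓ:ℝ) ^ ((d:ℝ) - 2) = (ℓ:ℝ) ^ ((d:ℝ) - 3) * (ℓ:ℝ) := by
      rw [← Real.rpow_add_one hℓ0.ne' ((d:ℝ) - 3)]
      congr 1
      ring
    have e3 : (2:ℝ) ^ ((d:ℝ) - 2) * (2:ℝ) ^ (-(2:ℝ) * (ℓ:ℝ)) = P⁻¹ := by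
      rw [hPdef, ← Real.rpow_add two_pos, ← Real.rpow_neg two_pos.le]
      congr 1; ring
    -- final chain
    calc Gdeg ℓ * Nfac ℓ ^ 2
        = Gdeg ℓ * (L ^ (-(d:ℝ)) * (B ^ 2 / (P * Real.Gamma ((ℓ:ℝ) + (d:ℝ)/2) ^ 2 * g ^ 2))) := by
          rw [hNsq]
      _ ≤ (D * (ℓ:ℝ) ^ (d - 2)) * (L ^ (-(d:ℝ)) *
            ((x * G1 ^ 2) / (P * Real.Gamma ((ℓ:ℝ) + (d:ℝ)/2) ^ 2 * g ^ 2))) := by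
          apply mul_le_mul hGd _ (by positivity) (by positivity)
          apply mul_le_mul_of_nonneg_left _ (by positivity)
          apply div_le_div_of_nonneg_right ?_ (by positivity)
          exact hB2
      _ = (D * (ℓ:ℝ) ^ (d - 2)) * (L ^ (-(d:ℝ)) * (1 / (P * x * g ^ 2))) := by
          rw [hQx, Real.Gamma_add_one hx.ne', ← hG1def]
          congr 1
          rw [mul_pow]
          field_simp
      _ ≤ (D * (ℓ:ℝ) ^ (d - 2)) * (L ^ (-(d:ℝ)) * (1 / (P * (ℓ:ℝ) * g ^ 2))) := by
          apply mul_le_mul_of_nonneg_left _ (by positivity)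
          apply mul_le_mul_of_nonneg_left _ (by positivity)
          apply div_le_div_of_nonneg_left one_pos.le (by positivity) ?_
          gcongr
      _ = (D * L ^ (-(d:ℝ)) * (g⁻¹) ^ 2 * (2:ℝ) ^ ((d:ℝ) - 2)) * (2:ℝ) ^ (-(2:ℝ) * (ℓ:ℝ))
            * (ℓ:ℝ) ^ ((d:ℝ) - 3) := by
          rw [e1, hℓe,
            show (D * L ^ (-(d:ℝ)) * (g⁻¹) ^ 2 * (2:ℝ) ^ ((d:ℝ) - 2)) * (2:ℝ) ^ (-(2:ℝ) * (ℓ:ℝ))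
                * (ℓ:ℝ) ^ ((d:ℝ) - 3)
              = D * L ^ (-(d:ℝ)) * (g⁻¹) ^ 2
                * ((2:ℝ) ^ ((d:ℝ) - 2) * (2:ℝ) ^ (-(2:ℝ) * (ℓ:ℝ))) * (ℓ:ℝ) ^ ((d:ℝ) - 3) by ring,
            e3]
          field_simp
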